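/- Let A₁, A₂, B be random variables on a probability space, each taking values in {0,1} almost surely. Then E[A₁] + E[A₂] + E[B] − E[A₁B] − E[A₂B] − 1 ≤ E[A₁A₂]. -/

import Mathlib

open MeasureTheory

lemma int_of_01 {Ω : Type*} [MeasurableSpace Ω] (μ : Measure Ω) [IsProbabilityMeasure μ]
    (f : Ω → ℝ) (mf : Measurable f) (hf : ∀ᵐ ω ∂μ, f ω = 0 ∨ f ω = 1) :
    Integrable f μ := by
  refine Integrable.mono' (integrable_const 1) mf.aestronglyMeasurable ?_
  filter_upwards [hf] with ω h
  rcases h with h | h <;> simp [h]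

theorem stmt_4 {Ω : Type*} [MeasurableSpace Ω] (μ : Measure Ω) [IsProbabilityMeasure μ]
    (A₁ A₂ B : Ω → ℝ)
    (mA₁ : Measurable A₁) (mA₂ : Measurable A₂) (mB : Measurable B)
    (hA₁ : ∀ᵐ ω ∂μ, A₁ ω = 0 ∨ A₁ ω = 1)
    (hA₂ : ∀ᵐ ω ∂μ, A₂ ω = 0 ∨ A₂ ω = 1)
    (hB : ∀ᵐ ω ∂μ, B ω = 0 ∨ B ω = 1) :
    (∫ ω, A₁ ω ∂μ) + (∫ ω, A₂ ω ∂μ) + (∫ ω, B ω ∂μ)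
      - (∫ ω, A₁ ω * B ω ∂μ) - (∫ ω, A₂ ω * B ω ∂μ) - 1 ≤ ∫ ω, A₁ ω * A₂ ω ∂μ := by
  have h12 : ∀ᵐ ω ∂μ, A₁ ω * A₂ ω = 0 ∨ A₁ ω * A₂ ω = 1 := by
    filter_upwards [hA₁, hA₂] with ω h1 h2
    rcases h1 with h1 | h1 <;> rcases h2 with h2 | h2 <;> simp [h1, h2]
  have h1b : ∀ᵐ ω ∂μ, A₁ ω * B ω = 0 ∨ A₁ ω * B ω = 1 := by
    filter_upwards [hA₁, hB] with ω h1 h2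
    rcases h1 with h1 | h1 <;> rcases h2 with h2 | h2 <;> simp [h1, h2]
  have h2b : ∀ᵐ ω ∂μ, A₂ ω * B ω = 0 ∨ A₂ ω * B ω = 1 := by
    filter_upwards [hA₂, hB] with ω h1 h2
    rcases h1 with h1 | h1 <;> rcases h2 with h2 | h2 <;> simp [h1, h2]
  have i1 := int_of_01 μ A₁ mA₁ hA₁
  have i2 := int_of_01 μ A₂ mA₂ hA₂
  have ib := int_of_01 μ B mB hB
  have i12 := int_of_01 μ (fun ω => A₁ ω * A₂ ω) (mA₁.mul mA₂) h12
  have i1b := int_of_01 μ (fun ω => A₁ ω * B ω) (mA₁.mul mB) h1b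
  have i2b := int_of_01 μ (fun ω => A₂ ω * B ω) (mA₂.mul mB) h2b
  have key : (∫ ω, (A₁ ω + A₂ ω + B ω - A₁ ω * B ω - A₂ ω * B ω - A₁ ω * A₂ ω) ∂μ)
      ≤ ∫ _ω, (1 : ℝ) ∂μ := by
    refine integral_mono_ae (((((i1.add i2).add ib).sub i1b).sub i2b).sub i12) (integrable_const 1) ?_
    filter_upwards [hA₁, hA₂, hB] with ω h1 h2 hb
    rcases h1 with h1 | h1 <;> rcases h2 with h2 | h2 <;> rcases hb with hb | hb <;>
      simp [h1, h2, hb]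
  rw [integral_const] at key
  simp only [measure_univ, probReal_univ, ENNReal.toReal_one, one_smul, smul_eq_mul] at key
  have expand : (∫ ω, (A₁ ω + A₂ ω + B ω - A₁ ω * B ω - A₂ ω * B ω - A₁ ω * A₂ ω) ∂μ)
      = (∫ ω, A₁ ω ∂μ) + (∫ ω, A₂ ω ∂μ) + (∫ ω, B ω ∂μ)
        - (∫ ω, A₁ ω * B ω ∂μ) - (∫ ω, A₂ ω * B ω ∂μ) - (∫ ω, A₁ ω * A₂ ω ∂μ) := by
    have e1 := integral_sub (f := fun ω => A₁ ω + A₂ ω + B ω - A₁ ω * B ω - A₂ ω * B ω)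
      (g := fun ω => A₁ ω * A₂ ω) (((((i1.add i2).add ib).sub i1b).sub i2b)) i12
    have e2 := integral_sub (f := fun ω => A₁ ω + A₂ ω + B ω - A₁ ω * B ω)
      (g := fun ω => A₂ ω * B ω) ((((i1.add i2).add ib).sub i1b)) i2b
    have e3 := integral_sub (f := fun ω => A₁ ω + A₂ ω + B ω)
      (g := fun ω => A₁ ω * B ω) (((i1.add i2).add ib)) i1b
    have e4 := integral_add (f := fun ω => A₁ ω + A₂ ω) (g := B) (i1.add i2) ib
    have e5 := integral_add (f := A₁) (g := A₂) i1 i2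
    rw [e1, e2, e3, e4, e5]
  rw [expand] at key
  linarith
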